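/- Let a ∈ ℝ, λ > 1, c > 0, and let T_* = T_*(a,λ,c) be the shock time. Then 1 − c·B(t) > 0 for all t ∈ [0,T_*), the function w(t) = −c / (A(t)·(1 − c·B(t))) satisfies w(0) = −c and the Riccati equation w'(t) = −w(t)² − a·w(t)/(1+t)^λ for all t ∈ [0,T_*), and w(t) → −∞ as t → T_*⁻. (This is the evolution of the slope ∂_x φ along the characteristic of the damped Burgers equation issuing from a point of minimal initial slope −c; the slope blows up exactly at time T_*.) -/

import Mathlib

/-- `A(t) = exp((a/(λ−1))·(1 − (1+t)^(1−λ)))`, i.e. `A(t) = exp(∫₀ᵗ a/(1+s)^λ ds)`. -/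
noncomputable def dampA (a lam t : ℝ) : ℝ :=
  Real.exp (a / (lam - 1) * (1 - (1 + t) ^ (1 - lam)))

/-- `B(t) = ∫₀ᵗ A(s)⁻¹ ds = ∫₀ᵗ exp((a/(λ−1))·((1+s)^(1−λ) − 1)) ds`. -/
noncomputable def dampB (a lam t : ℝ) : ℝ :=
  ∫ s in (0:ℝ)..t, Real.exp (a / (lam - 1) * ((1 + s) ^ (1 - lam) - 1))

/-- The slope `w(t) = −c/(A(t)·(1 − c·B(t)))` along the characteristic issuing from a point
of minimal initial slope `−c`. -/
noncomputable def dampW (a lam c t : ℝ) : ℝ :=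
  -c / (dampA a lam t * (1 - c * dampB a lam t))

namespace DampAux

open Real Set Filter intervalIntegral MeasureTheory

noncomputable def f (a lam s : ℝ) : ℝ :=
  Real.exp (a / (lam - 1) * ((1 + s) ^ (1 - lam) - 1))

lemma f_pos (a lam s : ℝ) : 0 < f a lam s := Real.exp_pos _

lemma f_contAt {s : ℝ} (a lam : ℝ) (hs : s ∈ Ioi (-1 : ℝ)) : ContinuousAt (f a lam) s := by
  have h1 : (0:ℝ) < 1 + s := by simpa using neg_lt_iff_pos_add'.mp hs
  have hr : ContinuousAt (fun x : ℝ => (1 + x) ^ (1 - lam)) s := by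
    have := Real.continuousAt_rpow_const (1 + s) (1 - lam) (Or.inl h1.ne')
    exact this.comp (by fun_prop)
  exact Real.continuous_exp.continuousAt.comp (by fun_prop)

lemma f_contOn (a lam : ℝ) : ContinuousOn (f a lam) (Ioi (-1 : ℝ)) :=
  fun s hs => (f_contAt a lam hs).continuousWithinAt

lemma f_intble (a lam : ℝ) {u v : ℝ} (hu : -1 < u) (hv : -1 < v) :
    IntervalIntegrable (f a lam) volume u v := by
  apply ContinuousOn.intervalIntegrable
  apply (f_contOn a lam).mono
  intro x hx
  rw [Set.mem_uIcc] at hx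
  show -1 < x
  rcases hx with h | h
  · exact lt_of_lt_of_le hu h.1
  · exact lt_of_lt_of_le hv h.1

lemma B_hasDeriv (a lam : ℝ) {t : ℝ} (ht : -1 < t) :
    HasDerivAt (dampB a lam) (f a lam t) t := by
  apply intervalIntegral.integral_hasDerivAt_right
  · exact f_intble a lam (by norm_num) ht
  · exact ContinuousAt.stronglyMeasurableAtFilter isOpen_Ioi
      (fun x hx => f_contAt a lam hx) t ht
  · exact f_contAt a lam ht

lemma A_pos (a lam t : ℝ) : 0 < dampA a lam t := Real.exp_pos _

lemma f_mul_A (a lam t : ℝ) : f a lam t * dampA a lam t = 1 := by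
  rw [f, dampA, ← Real.exp_add]
  rw [show a / (lam - 1) * ((1 + t) ^ (1 - lam) - 1) +
      a / (lam - 1) * (1 - (1 + t) ^ (1 - lam)) = 0 by ring, Real.exp_zero]

lemma A_hasDeriv {a lam : ℝ} (hlam : 1 < lam) {t : ℝ} (ht : -1 < t) :
    HasDerivAt (dampA a lam) (dampA a lam t * (a / (1 + t) ^ lam)) t := by
  have h1 : (0:ℝ) < 1 + t := by linarith
  have hr : HasDerivAt (fun x : ℝ => (1 + x) ^ (1 - lam))
      ((1 - lam) * (1 + t) ^ (1 - lam - 1) * 1) t := by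
    exact (Real.hasDerivAt_rpow_const (Or.inl h1.ne')).comp t
      ((hasDerivAt_id t).const_add 1)
  have hg : HasDerivAt (fun x : ℝ => a / (lam - 1) * (1 - (1 + x) ^ (1 - lam)))
      (a / (lam - 1) * (0 - (1 - lam) * (1 + t) ^ (1 - lam - 1) * 1)) t :=
    ((hasDerivAt_const t (1:ℝ)).sub hr).const_mul _
  have := hg.exp
  refine this.congr_deriv ?_
  have hlam1 : (1 : ℝ) - lam - 1 = -lam := by ring
  rw [hlam1] at this ⊢
  rw [dampA, Real.rpow_neg h1.le]
  have hne : ((1 + t):ℝ) ^ lam ≠ 0 := (Real.rpow_pos_of_pos h1 lam).ne'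
  have hl : lam - 1 ≠ 0 := by linarith
  field_simp
  ring
end DampAux

theorem stmt7 (a lam c T : ℝ) (hlam : 1 < lam) (hc : 0 < c)
    (hT : 0 < T) (hBT : dampB a lam T = 1 / c) :
    (∀ t ∈ Set.Ico (0 : ℝ) T, 0 < 1 - c * dampB a lam t) ∧
    dampW a lam c 0 = -c ∧
    (∀ t ∈ Set.Ico (0 : ℝ) T,
      HasDerivAt (dampW a lam c)
        (-(dampW a lam c t) ^ 2 - a * dampW a lam c t / (1 + t) ^ lam) t) ∧
    Filter.Tendsto (dampW a lam c) (nhdsWithin T (Set.Iio T)) Filter.atBot := by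
  have hTm : (-1:ℝ) < T := by linarith
  have hBlt : ∀ t ∈ Set.Ico (0:ℝ) T, dampB a lam t < 1 / c := by
    rintro t ⟨ht0, htT⟩
    have hadd : dampB a lam t + ∫ s in t..T, DampAux.f a lam s = dampB a lam T :=
      intervalIntegral.integral_add_adjacent_intervals
        (DampAux.f_intble a lam (by norm_num) (by linarith))
        (DampAux.f_intble a lam (by linarith) hTm)
    have hpos : 0 < ∫ s in t..T, DampAux.f a lam s :=
      intervalIntegral.intervalIntegral_pos_of_pos
        (DampAux.f_intble a lam (by linarith) hTm)
        (fun x => DampAux.f_pos a lam x) htT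
    rw [← hBT]; linarith
  have h1 : ∀ t ∈ Set.Ico (0:ℝ) T, 0 < 1 - c * dampB a lam t := by
    intro t ht
    have h := hBlt t ht
    have : c * dampB a lam t < c * (1 / c) := by
      exact mul_lt_mul_of_pos_left h hc
    rw [mul_one_div_cancel hc.ne'] at this
    linarith
  refine ⟨h1, ?_, ?_, ?_⟩
  · have hB0 : dampB a lam 0 = 0 := intervalIntegral.integral_same
    have hA0 : dampA a lam 0 = 1 := by
      simp [dampA, Real.one_rpow]
    simp [dampW, hB0, hA0]
  · rintro t ⟨ht0, htT⟩
    have htm : (-1:ℝ) < t := by linarith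
    have h1t : (0:ℝ) < 1 + t := by linarith
    have hPpos : (0:ℝ) < (1 + t) ^ lam := Real.rpow_pos_of_pos h1t lam
    have hA := DampAux.A_hasDeriv (a := a) hlam htm
    have hBd := DampAux.B_hasDeriv a lam htm
    have hG : HasDerivAt (fun x => 1 - c * dampB a lam x) (-(c * DampAux.f a lam t)) t :=
      ((hBd.const_mul c).const_sub 1)
    have hD : HasDerivAt (fun x => dampA a lam x * (1 - c * dampB a lam x))
        (dampA a lam t * (a / (1 + t) ^ lam) * (1 - c * dampB a lam t) +
          dampA a lam t * (-(c * DampAux.f a lam t))) t := hA.mul hG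
    have hApos := DampAux.A_pos a lam t
    have hGpos := h1 t ⟨ht0, htT⟩
    have hDne : dampA a lam t * (1 - c * dampB a lam t) ≠ 0 :=
      (mul_pos hApos hGpos).ne'
    have hW := (hasDerivAt_const t (-c)).div hD hDne
    have hWeq : dampW a lam c = fun x => -c / (dampA a lam x * (1 - c * dampB a lam x)) := rfl
    rw [hWeq]
    refine hW.congr_deriv ?_
    have hF : DampAux.f a lam t = (dampA a lam t)⁻¹ := by
      exact eq_inv_of_mul_eq_one_left (DampAux.f_mul_A a lam t)
    rw [hF]
    field_simp
    ring
  · have hcont : ContinuousAt (fun x => dampA a lam x * (1 - c * dampB a lam x)) T :=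
      (DampAux.A_hasDeriv (a := a) hlam hTm).continuousAt.mul
        ((((DampAux.B_hasDeriv a lam hTm).continuousAt.const_mul c).const_sub 1))
    have hDT : dampA a lam T * (1 - c * dampB a lam T) = 0 := by
      rw [hBT, mul_one_div_cancel hc.ne']
      ring
    have htend0 : Filter.Tendsto (fun x => dampA a lam x * (1 - c * dampB a lam x))
        (nhdsWithin T (Set.Iio T)) (nhdsWithin 0 (Set.Ioi 0)) := by
      rw [tendsto_nhdsWithin_iff]
      constructor
      · rw [← hDT]
        exact hcont.continuousWithinAt
      · filter_upwards [Ioo_mem_nhdsLT_of_mem ⟨hT, le_rfl⟩] with x hx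
        exact mul_pos (DampAux.A_pos a lam x) (h1 x ⟨hx.1.le, hx.2⟩)
    have hinv : Filter.Tendsto (fun x => (dampA a lam x * (1 - c * dampB a lam x))⁻¹)
        (nhdsWithin T (Set.Iio T)) Filter.atTop := tendsto_inv_nhdsGT_zero.comp htend0
    have := Filter.Tendsto.const_mul_atTop_of_neg (by linarith : -c < 0) hinv
    refine this.congr fun x => ?_
    show -c * (dampA a lam x * (1 - c * dampB a lam x))⁻¹ = dampW a lam c x
    rw [dampW, div_eq_mul_inv]
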